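/- For a positive integer m, reals b > 0 and Ω ≥ 0, with β = 1/(2b), c = Ω/(2b(2bm+Ω)), ζ(z) = (2bm/(2bm+Ω))^m β (−1)^z (1−m)_z c^z/(z!)², the function f(x) = Σ_{z=0}^{m−1} ζ(z) x^z e^{−(β−c)x} integrates to 1 over [0, ∞), i.e., Σ_{z=0}^{m−1} ζ(z) z!/(β−c)^{z+1} = 1. -/

import Mathlib

open Real Finset


lemma poch_neg (n : ℕ) : ∀ z : ℕ, (-1:ℝ)^z * (ascPochhammer ℝ z).eval (-(n:ℝ)) = n.descFactorial z := by
  intro z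
  induction z with
  | zero => simp
  | succ z ih =>
    rw [ascPochhammer_succ_eval, Nat.descFactorial_succ, pow_succ]
    rcases le_or_gt (z+1) n with h | h
    · have : ((n - z : ℕ) : ℝ) = (n:ℝ) - z := by
        push_cast [Nat.cast_sub (by omega : z ≤ n)]; ring
      push_cast
      rw [this]
      nlinarith [ih]
    · have h0 : n.descFactorial z = 0 ∨ (n:ℝ) - z = 0 := by
        rcases Nat.lt_or_ge n z with h' | h'
        · exact Or.inl (Nat.descFactorial_eq_zero_iff_lt.mpr h')
        · right; have : n = z := by omega
          simp [this]
      have hz : n - z = 0 := by omega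
      rcases h0 with h0 | h0
      · have hE : (-1:ℝ)^z * (ascPochhammer ℝ z).eval (-(n:ℝ)) = 0 := by
          rw [ih, h0]; simp
        simp only [hz, Nat.cast_zero, zero_mul]
        nlinarith [hE]
      · have h1 : -(n:ℝ) + z = 0 := by linarith
        simp [hz, h1]


/-- Normalization of the closed-form Shadowed-Rician power PDF for integer `m`:
`Σ_{z=0}^{m−1} ζ(z) z!/(β−c)^{z+1} = 1` with the specific parameters `β`, `c`, `ζ`. -/
theorem shadowed_rician_normalized (b Ω : ℝ) (m : ℕ) (hb : 0 < b) (hm : 1 ≤ m)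
    (hΩ : 0 ≤ Ω) :
    ∑ z ∈ range m,
        ((2 * b * (m : ℝ) / (2 * b * (m : ℝ) + Ω)) ^ m * (1 / (2 * b)) * (-1) ^ z *
            ((ascPochhammer ℝ z).eval (1 - (m : ℝ))) *
            (Ω / (2 * b * (2 * b * (m : ℝ) + Ω))) ^ z / ((Nat.factorial z : ℝ)) ^ 2) *
          (Nat.factorial z : ℝ) /
          (1 / (2 * b) - Ω / (2 * b * (2 * b * (m : ℝ) + Ω))) ^ (z + 1) = 1 := by
  obtain ⟨n, rfl⟩ : ∃ n, m = n + 1 := ⟨m - 1, by omega⟩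
  have hm' : (0:ℝ) < (n:ℝ) + 1 := by positivity
  have hmc : ((n + 1 : ℕ) : ℝ) = (n:ℝ) + 1 := by push_cast; ring
  have hb2 : (0:ℝ) < 2 * b := by linarith
  have hS : (0:ℝ) < 2 * b * ((n:ℝ)+1) + Ω := by positivity
  have hS' : 2 * b * (((n+1:ℕ)):ℝ) + Ω ≠ 0 := by rw [hmc]; positivity
  have hD : 1 / (2 * b) - Ω / (2 * b * (2 * b * (((n+1:ℕ)):ℝ) + Ω))
      = ((n:ℝ)+1) / (2 * b * (((n+1:ℕ)):ℝ) + Ω) := by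
    rw [hmc]; field_simp; ring
  have hsum : ∀ z ∈ range (n+1),
      ((2 * b * (((n+1:ℕ)) : ℝ) / (2 * b * (((n+1:ℕ)) : ℝ) + Ω)) ^ (n+1) * (1 / (2 * b)) * (-1) ^ z *
            ((ascPochhammer ℝ z).eval (1 - (((n+1:ℕ)) : ℝ))) *
            (Ω / (2 * b * (2 * b * (((n+1:ℕ)) : ℝ) + Ω))) ^ z / ((Nat.factorial z : ℝ)) ^ 2) *
          (Nat.factorial z : ℝ) /
          (1 / (2 * b) - Ω / (2 * b * (2 * b * (((n+1:ℕ)) : ℝ) + Ω))) ^ (z + 1)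
      = (2 * b * ((n:ℝ)+1) / (2 * b * ((n:ℝ)+1) + Ω)) ^ n *
          ((Ω / (2 * b * ((n:ℝ)+1))) ^ z * 1 ^ (n - z) * (n.choose z : ℝ)) := by
    intro z hz
    have hzn : z ≤ n := by simpa using Nat.lt_succ_iff.mp (mem_range.mp hz)
    have h1m : 1 - ((n:ℝ) + 1) = -(n:ℝ) := by ring
    have hP : (-1:ℝ)^z * (ascPochhammer ℝ z).eval (-(n:ℝ)) = n.descFactorial z := poch_neg n z
    have hdf : (n.descFactorial z : ℝ) = (n.choose z : ℝ) * (z.factorial : ℝ) := by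
      rw [← Nat.cast_mul, Nat.descFactorial_eq_factorial_mul_choose]
      push_cast; ring
    have hfz : (z.factorial : ℝ) ≠ 0 := by positivity
    rw [hD, hmc, h1m]
    rw [show ((2 * b * ((n:ℝ)+1) / (2 * b * ((n:ℝ)+1) + Ω)) ^ (n+1) * (1 / (2 * b)) * (-1) ^ z *
            ((ascPochhammer ℝ z).eval (-(n:ℝ)))) =
        ((2 * b * ((n:ℝ)+1) / (2 * b * ((n:ℝ)+1) + Ω)) ^ (n+1) * (1 / (2 * b)) *
            ((-1) ^ z * (ascPochhammer ℝ z).eval (-(n:ℝ)))) by ring, hP, hdf]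
    have hSne : (2 * b * ((n:ℝ)+1) + Ω) ≠ 0 := ne_of_gt hS
    have hMne : ((n:ℝ)+1) ≠ 0 := ne_of_gt hm'
    have e1 : (Ω / (2*b*((n:ℝ)+1)))^z
        = (Ω/(2*b*(2 * b * ((n:ℝ)+1) + Ω)))^z * ((((n:ℝ)+1)/(2 * b * ((n:ℝ)+1) + Ω))^z)⁻¹ := by
      rw [← inv_pow, inv_div, ← mul_pow]
      congr 1
      field_simp
    rw [pow_succ, one_pow, e1]
    have hMSz : ((((n:ℝ)+1)/(2 * b * ((n:ℝ)+1) + Ω))^z) ≠ 0 := by positivity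
    field_simp
    rw [pow_succ]
    field_simp
  rw [Finset.sum_congr rfl hsum, ← Finset.mul_sum, ← Commute.add_pow (Commute.all _ _)]
  rw [← mul_pow]
  have : (2 * b * ((n:ℝ)+1) / (2 * b * ((n:ℝ)+1) + Ω)) * (Ω / (2 * b * ((n:ℝ)+1)) + 1) = 1 := by
    field_simp
    ring
  rw [this, one_pow]
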